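/- Assume the parameter matrices {R_Q^{l,h}, R_K^{l,h}}_{l∈[L],h∈[H]} ⊂ R^{m×d}, {R_V^{l,h}} ⊂ R^{m×m}, and U ∈ R^{m×d_in} are drawn independently with entries from an absolutely continuous joint distribution, and m ≥ 2d·(H + H² + ... + H^L) + d_in·H^L. Then with probability 1, the matrix R_all ∈ R^{m×M} — formed by horizontally concatenating all blocks R_V^{1,h_1}···R_V^{l-1,h_{l-1}}R_Q^{l,h_l}, all blocks R_V^{1,h_1}···R_V^{l-1,h_{l-1}}R_K^{l,h_l} (over all l ∈ [L] and all prefixes), and all blocks R_V^{1,h_1}···R_V^{L,h_L}U (over all full paths) — has full column rank M, where M = 2d·Σ_{l=1}^L H^l + d_in·H^L. -/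

import Mathlib

open MeasureTheory Matrix

/-- Index set for the entries of all parameter matrices of the universal
transformer: the entries of `R_Q^{l,h}, R_K^{l,h} ∈ ℝ^{m×d}`,
`R_V^{l,h} ∈ ℝ^{m×m}` (`l ∈ [L]`, `h ∈ [H]`) and `U ∈ ℝ^{m×din}`. -/
abbrev ParamIdx (H L m d din : ℕ) :=
  ((Fin L × Fin H × Fin m × Fin d) ⊕ (Fin L × Fin H × Fin m × Fin d)) ⊕
    ((Fin L × Fin H × Fin m × Fin m) ⊕ (Fin m × Fin din))

/-- The parameter space: one real number for each parameter entry. -/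
abbrev Params (H L m d din : ℕ) := ParamIdx H L m d din → ℝ

/-- The query matrices `R_Q^{l,h}` extracted from a parameter vector. -/
def RQof {H L m d din : ℕ} (θ : Params H L m d din) (l : Fin L) (h : Fin H) :
    Matrix (Fin m) (Fin d) ℝ :=
  Matrix.of fun i j => θ (Sum.inl (Sum.inl (l, h, i, j)))

/-- The key matrices `R_K^{l,h}` extracted from a parameter vector. -/
def RKof {H L m d din : ℕ} (θ : Params H L m d din) (l : Fin L) (h : Fin H) :
    Matrix (Fin m) (Fin d) ℝ :=
  Matrix.of fun i j => θ (Sum.inl (Sum.inr (l, h, i, j)))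

/-- The value matrices `R_V^{l,h}` extracted from a parameter vector. -/
def RVof {H L m d din : ℕ} (θ : Params H L m d din) (l : Fin L) (h : Fin H) :
    Matrix (Fin m) (Fin m) ℝ :=
  Matrix.of fun i j => θ (Sum.inr (Sum.inl (l, h, i, j)))

/-- The unembedding matrix `U` extracted from a parameter vector. -/
def Uof {H L m d din : ℕ} (θ : Params H L m d din) :
    Matrix (Fin m) (Fin din) ℝ :=
  Matrix.of fun i j => θ (Sum.inr (Sum.inr (i, j)))

/-- The column index of the stacked matrix `R_all`: a `d`-wide block of columns
for each layer `l ∈ [L]`, prefix in `[H]^{l-1}` and final head — once for the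
query blocks and once for the key blocks — and a `din`-wide block for each full
path in `[H]^L`. -/
abbrev ColIdx (H L d din : ℕ) :=
  ((Σ l : Fin L, (Fin (l : ℕ) → Fin H) × Fin H × Fin d) ⊕
      (Σ l : Fin L, (Fin (l : ℕ) → Fin H) × Fin H × Fin d)) ⊕
    ((Fin L → Fin H) × Fin din)

/-- `rPath RV hs l = R_V^{1,h_1} ⋯ R_V^{l,h_l}` (empty product = identity). -/
noncomputable def rPath {m H L : ℕ}
    (RV : Fin L → Fin H → Matrix (Fin m) (Fin m) ℝ)
    (hs : ℕ → Fin H) : ℕ → Matrix (Fin m) (Fin m) ℝ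
  | 0 => 1
  | l + 1 => rPath RV hs l * (if hl : l < L then RV ⟨l, hl⟩ (hs l) else 1)

/-- Extension of a finite head prefix to `ℕ → Fin H` (values beyond the prefix
are irrelevant for `rPath _ _ l` with `l` at most the prefix length). -/
def extPrefix {H l : ℕ} (hH : 0 < H) (p : Fin l → Fin H) : ℕ → Fin H :=
  fun t => if ht : t < l then p ⟨t, ht⟩ else ⟨0, hH⟩

/-- The stacked matrix `R_all` formed by horizontally concatenating all blocks
`R_V^{1,h_1}⋯R_V^{l-1,h_{l-1}} R_Q^{l,h_l}`, all blocks
`R_V^{1,h_1}⋯R_V^{l-1,h_{l-1}} R_K^{l,h_l}`, and all blocks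
`R_V^{1,h_1}⋯R_V^{L,h_L} U`. -/
noncomputable def Rall {H L m d din : ℕ} (hH : 0 < H) (θ : Params H L m d din) :
    Matrix (Fin m) (ColIdx H L d din) ℝ :=
  Matrix.of fun i c =>
    match c with
    | Sum.inl (Sum.inl ⟨l, p, h, j⟩) =>
        (rPath (RVof θ) (extPrefix hH p) (l : ℕ) * RQof θ l h) i j
    | Sum.inl (Sum.inr ⟨l, p, h, j⟩) =>
        (rPath (RVof θ) (extPrefix hH p) (l : ℕ) * RKof θ l h) i j
    | Sum.inr (p, j) =>
        (rPath (RVof θ) (extPrefix hH p) L * Uof θ) i j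


section MZ
open MvPolynomial

lemma measurable_eval {ι : Type*} [Fintype ι] (p : MvPolynomial ι ℝ) :
    Measurable fun x : ι → ℝ => MvPolynomial.eval x p :=
  (MvPolynomial.continuous_eval p).measurable

lemma mv_zero_set_fin : ∀ (n : ℕ) (p : MvPolynomial (Fin n) ℝ), p ≠ 0 →
    volume {x : Fin n → ℝ | MvPolynomial.eval x p = 0} = 0 := by
  intro n
  induction n with
  | zero =>
    intro p hp
    convert measure_empty (μ := (volume : Measure (Fin 0 → ℝ)))
    rw [Set.eq_empty_iff_forall_notMem]
    intro x hx
    exact hp <| MvPolynomial.funext fun y => by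
      rw [Subsingleton.elim y x, hx, map_zero]
  | succ n ih =>
    intro p hp
    set Q := MvPolynomial.finSuccEquiv ℝ n p with hQ
    have hQ0 : Q ≠ 0 := fun h =>
      hp <| (MvPolynomial.finSuccEquiv ℝ n).injective (by rw [map_zero, ← hQ]; exact h)
    have hc : Q.leadingCoeff ≠ 0 := Polynomial.leadingCoeff_ne_zero.2 hQ0
    have hB : volume {z : Fin n → ℝ | MvPolynomial.eval z Q.leadingCoeff = 0} = 0 := ih _ hc
    set T : Set (ℝ × (Fin n → ℝ)) := {yz | MvPolynomial.eval (Fin.cons yz.1 yz.2) p = 0} with hT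
    have hconsM : Measurable fun yz : ℝ × (Fin n → ℝ) => (Fin.cons yz.1 yz.2 : Fin (n+1) → ℝ) := by
      apply measurable_pi_iff.2
      intro i
      refine Fin.cases ?_ ?_ i
      · simpa using measurable_fst
      · intro j; simp only [Fin.cons_succ]; exact (measurable_pi_apply j).comp measurable_snd
    have hTm : MeasurableSet T := ((measurable_eval p).comp hconsM) (measurableSet_singleton 0)
    have hcx : ∀ x : Fin (n+1) → ℝ, (Fin.cons (x 0) (Fin.removeNth 0 x) : Fin (n+1) → ℝ) = x := by
      intro x; ext i
      refine Fin.cases rfl (fun j => ?_) i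
      simp [Fin.removeNth, Fin.succAbove, Fin.tail]
    have key : volume {x : Fin (n+1) → ℝ | MvPolynomial.eval x p = 0}
        = (volume : Measure (ℝ × (Fin n → ℝ))) T := by
      have hmp := MeasureTheory.volume_preserving_piFinSuccAbove (fun _ : Fin (n+1) => ℝ) 0
      have hpre : {x : Fin (n+1) → ℝ | MvPolynomial.eval x p = 0}
          = (MeasurableEquiv.piFinSuccAbove (fun _ : Fin (n+1) => ℝ) 0) ⁻¹' T := by
        ext x
        have he : (MeasurableEquiv.piFinSuccAbove (fun _ : Fin (n+1) => ℝ) 0) x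
            = (x 0, Fin.removeNth 0 x) := rfl
        simp only [Set.mem_setOf_eq, Set.mem_preimage, he, hT, hcx x]
      rw [hpre, hmp.measure_preimage hTm.nullMeasurableSet]
    rw [key, Measure.volume_eq_prod, Measure.prod_apply_symm hTm]
    have hsec : ∀ z : Fin n → ℝ, MvPolynomial.eval z Q.leadingCoeff ≠ 0 →
        volume ((fun y => (y, z)) ⁻¹' T) = 0 := by
      intro z hz
      have hmap : Polynomial.map (MvPolynomial.eval z) Q ≠ 0 := by
        intro h
        apply hz
        have h2 : Polynomial.coeff (Polynomial.map (MvPolynomial.eval z) Q) Q.natDegree = 0 := by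
          rw [h]; simp
        rw [Polynomial.coeff_map] at h2
        rw [Polynomial.leadingCoeff]
        exact h2
      have hsub : ((fun y => (y, z)) ⁻¹' T)
          ⊆ {y : ℝ | Polynomial.IsRoot (Polynomial.map (MvPolynomial.eval z) Q) y} := by
        intro y hy
        simp only [Set.mem_preimage, hT, Set.mem_setOf_eq] at hy ⊢
        rw [Polynomial.IsRoot, ← MvPolynomial.eval_eq_eval_mv_eval']
        exact hy
      exact measure_mono_null hsub ((Polynomial.finite_setOf_isRoot hmap).measure_zero _)
    have hae : (fun z => volume ((fun y => (y, z)) ⁻¹' T)) =ᵐ[volume] 0 := by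
      rw [Filter.EventuallyEq, ae_iff]
      refine measure_mono_null ?_ hB
      intro z hz
      simp only [Set.mem_setOf_eq, Pi.zero_apply] at hz ⊢
      by_contra hzB
      exact hz (hsec z hzB)
    rw [lintegral_congr_ae hae]
    simp

lemma mv_zero_set {ι : Type*} [Fintype ι] (p : MvPolynomial ι ℝ) (hp : p ≠ 0) :
    volume {x : ι → ℝ | MvPolynomial.eval x p = 0} = 0 := by
  classical
  set f : Fin (Fintype.card ι) ≃ ι := (Fintype.equivFin ι).symm with hf
  set q : MvPolynomial (Fin (Fintype.card ι)) ℝ := MvPolynomial.rename f.symm p with hq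
  have hq0 : q ≠ 0 := fun h => hp <|
    (MvPolynomial.rename_injective (R := ℝ) f.symm f.symm.injective)
      (by rw [map_zero]; exact h)
  have hmp := MeasureTheory.measurePreserving_piCongrLeft (fun _ : ι => (volume : Measure ℝ)) f
  have hSm : MeasurableSet {x : ι → ℝ | MvPolynomial.eval x p = 0} :=
    (measurable_eval p) (measurableSet_singleton 0)
  have hpre : (MeasurableEquiv.piCongrLeft (fun _ : ι => ℝ) f) ⁻¹' {x : ι → ℝ | MvPolynomial.eval x p = 0}
      = {y : Fin (Fintype.card ι) → ℝ | MvPolynomial.eval y q = 0} := by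
    ext y
    simp only [Set.mem_preimage, Set.mem_setOf_eq, hq, MvPolynomial.eval_rename]
    have hyy : ((MeasurableEquiv.piCongrLeft (fun _ : ι => ℝ) f) y) = y ∘ f.symm := by
      ext i
      simp [MeasurableEquiv.piCongrLeft, Equiv.piCongrLeft_apply]
    rw [hyy]
  have hfin : volume {x : ι → ℝ | MvPolynomial.eval x p = 0}
      = volume {y : Fin (Fintype.card ι) → ℝ | MvPolynomial.eval y q = 0} := by
    rw [← hpre]
    have h1 := hmp.measure_preimage hSm.nullMeasurableSet
    simpa [MeasureTheory.volume_pi] using h1.symm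
  rw [hfin]
  exact mv_zero_set_fin _ q hq0

end MZ

section Poly

open MvPolynomial

variable {H L m d din : ℕ}

/-- Polynomial ring in the parameter entries. -/
abbrev PP (H L m d din : ℕ) := MvPolynomial (ParamIdx H L m d din) ℝ

noncomputable def pRQ (l : Fin L) (h : Fin H) : Matrix (Fin m) (Fin d) (PP H L m d din) :=
  Matrix.of fun i j => MvPolynomial.X (Sum.inl (Sum.inl (l, h, i, j)))

noncomputable def pRK (l : Fin L) (h : Fin H) : Matrix (Fin m) (Fin d) (PP H L m d din) :=
  Matrix.of fun i j => MvPolynomial.X (Sum.inl (Sum.inr (l, h, i, j)))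

noncomputable def pRV (l : Fin L) (h : Fin H) : Matrix (Fin m) (Fin m) (PP H L m d din) :=
  Matrix.of fun i j => MvPolynomial.X (Sum.inr (Sum.inl (l, h, i, j)))

noncomputable def pU : Matrix (Fin m) (Fin din) (PP H L m d din) :=
  Matrix.of fun i j => MvPolynomial.X (Sum.inr (Sum.inr (i, j)))

noncomputable def pPath (hs : ℕ → Fin H) : ℕ → Matrix (Fin m) (Fin m) (PP H L m d din)
  | 0 => 1
  | l + 1 => pPath hs l * (if hl : l < L then pRV ⟨l, hl⟩ (hs l) else 1)

noncomputable def pRall (hH : 0 < H) : Matrix (Fin m) (ColIdx H L d din) (PP H L m d din) :=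
  Matrix.of fun i c =>
    match c with
    | Sum.inl (Sum.inl ⟨l, p, h, j⟩) =>
        ((pPath (extPrefix hH p) (l : ℕ) * pRQ l h : Matrix (Fin m) (Fin d) (PP H L m d din))) i j
    | Sum.inl (Sum.inr ⟨l, p, h, j⟩) =>
        ((pPath (extPrefix hH p) (l : ℕ) * pRK l h : Matrix (Fin m) (Fin d) (PP H L m d din))) i j
    | Sum.inr (p, j) =>
        ((pPath (extPrefix hH p) L * pU : Matrix (Fin m) (Fin din) (PP H L m d din))) i j

variable (θ : Params H L m d din)

lemma map_pRQ (l : Fin L) (h : Fin H) :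
    (pRQ (m := m) (din := din) l h).map (MvPolynomial.eval θ) = RQof θ l h := by
  ext i j; simp [pRQ, RQof, Matrix.map_apply]

lemma map_pRK (l : Fin L) (h : Fin H) :
    (pRK (m := m) (din := din) l h).map (MvPolynomial.eval θ) = RKof θ l h := by
  ext i j; simp [pRK, RKof, Matrix.map_apply]

lemma map_pRV (l : Fin L) (h : Fin H) :
    (pRV (d := d) (din := din) l h).map (MvPolynomial.eval θ) = RVof θ l h := by
  ext i j; simp [pRV, RVof, Matrix.map_apply]

lemma map_pU : (pU (H := H) (L := L) (d := d) (m := m) (din := din)).map (MvPolynomial.eval θ)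
    = Uof θ := by
  ext i j; simp [pU, Uof, Matrix.map_apply]

lemma map_pPath (hs : ℕ → Fin H) (t : ℕ) :
    (pPath (d := d) (din := din) hs t).map (MvPolynomial.eval θ) = rPath (RVof θ) hs t := by
  induction t with
  | zero =>
    show Matrix.map 1 _ = 1
    exact Matrix.map_one _ (map_zero _) (map_one _)
  | succ t iht =>
    show ((pPath (d := d) (din := din) hs t) * _).map _ = _
    rw [Matrix.map_mul, iht, rPath]
    congr 1
    split
    · exact map_pRV θ _ _
    · exact Matrix.map_one _ (map_zero _) (map_one _)

lemma map_pRall (hH : 0 < H) :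
    (pRall (m := m) (d := d) (din := din) hH).map (MvPolynomial.eval θ) = Rall hH θ := by
  ext i c
  rcases c with (⟨l, p, h, j⟩ | ⟨l, p, h, j⟩) | ⟨p, j⟩
  · have hm : (((pPath (extPrefix hH p) (l : ℕ) * pRQ l h : Matrix (Fin m) (Fin d) (PP H L m d din))).map (MvPolynomial.eval θ))
        = rPath (RVof θ) (extPrefix hH p) (l : ℕ) * RQof θ l h := by
      rw [← map_pPath, ← map_pRQ]; exact Matrix.map_mul
    exact congrFun (congrFun hm i) j
  · have hm : (((pPath (extPrefix hH p) (l : ℕ) * pRK l h : Matrix (Fin m) (Fin d) (PP H L m d din))).map (MvPolynomial.eval θ))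
        = rPath (RVof θ) (extPrefix hH p) (l : ℕ) * RKof θ l h := by
      rw [← map_pPath, ← map_pRK]; exact Matrix.map_mul
    exact congrFun (congrFun hm i) j
  · have hm : (((pPath (extPrefix hH p) L * pU : Matrix (Fin m) (Fin din) (PP H L m d din))).map (MvPolynomial.eval θ))
        = rPath (RVof θ) (extPrefix hH p) L * Uof θ := by
      rw [← map_pPath, ← map_pU]; exact Matrix.map_mul
    exact congrFun (congrFun hm i) j

noncomputable def gramPoly (hH : 0 < H) : PP H L m d din :=
  ((pRall (m := m) (d := d) (din := din) hH)ᵀ * pRall hH).det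

lemma eval_gramPoly (hH : 0 < H) :
    MvPolynomial.eval θ (gramPoly (m := m) (d := d) (din := din) hH)
      = ((Rall hH θ)ᵀ * Rall hH θ).det := by
  have := RingHom.map_det (MvPolynomial.eval θ : PP H L m d din →+* ℝ)
    ((pRall (m := m) (d := d) (din := din) hH)ᵀ * pRall hH)
  rw [gramPoly]
  erw [this]
  congr 1
  rw [RingHom.mapMatrix_apply]
  erw [Matrix.map_mul]
  rw [Matrix.transpose_map, map_pRall]

lemma rank_of_gram_ne (A : Matrix (Fin m) (ColIdx H L d din) ℝ) (h : (Aᵀ * A).det ≠ 0) :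
    A.rank = Fintype.card (ColIdx H L d din) := by
  rw [← Matrix.rank_transpose_mul_self]
  exact Matrix.rank_of_isUnit _ ((Matrix.isUnit_iff_isUnit_det _).2 (isUnit_iff_ne_zero.2 h))

lemma cardColIdx (H L d din : ℕ) :
    Fintype.card (ColIdx H L d din)
      = 2 * d * (∑ l ∈ Finset.range L, H ^ (l + 1)) + din * H ^ L := by
  have hs : Fintype.card (Σ l : Fin L, (Fin (l : ℕ) → Fin H) × Fin H × Fin d)
      = ∑ l ∈ Finset.range L, d * H ^ (l + 1) := by
    rw [Fintype.card_sigma]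
    rw [Fin.sum_univ_eq_sum_range (fun l => Fintype.card ((Fin l → Fin H) × Fin H × Fin d))]
    refine Finset.sum_congr rfl fun l _ => ?_
    simp [Fintype.card_fun, pow_succ]
    ring
  simp only [Fintype.card_sum, hs, Fintype.card_prod, Fintype.card_fun, Fintype.card_fin]
  rw [← Finset.mul_sum]
  ring

lemma cardColIdx_mono (hH : 0 < H) {L₁ L₂ : ℕ} (hL : L₁ ≤ L₂) (d din : ℕ) :
    Fintype.card (ColIdx H L₁ d din) ≤ Fintype.card (ColIdx H L₂ d din) := by
  rw [cardColIdx, cardColIdx]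
  refine Nat.add_le_add ?_ ?_
  · exact Nat.mul_le_mul_left _ (Finset.sum_le_sum_of_subset (Finset.range_subset_range.2 hL))
  · exact Nat.mul_le_mul_left _ (Nat.pow_le_pow_right hH hL)

end Poly


section Witness

open Matrix

noncomputable def nIdx {α : Type*} [Fintype α] (a : α) : ℕ := ((Fintype.equivFin α) a : ℕ)

lemma nIdx_inj {α : Type*} [Fintype α] {a b : α} (h : nIdx a = nIdx b) : a = b :=
  (Fintype.equivFin α).injective (Fin.ext h)

lemma nIdx_lt {α : Type*} [Fintype α] (a : α) : nIdx a < Fintype.card α :=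
  ((Fintype.equivFin α) a).isLt

def consHead {H L' d din : ℕ} (h : Fin H) : ColIdx H L' d din → ColIdx H (L' + 1) d din
  | .inl (.inl ⟨l, p, h0, j⟩) => .inl (.inl ⟨l.succ, (Fin.cons h p : Fin (↑l + 1) → Fin H), h0, j⟩)
  | .inl (.inr ⟨l, p, h0, j⟩) => .inl (.inr ⟨l.succ, (Fin.cons h p : Fin (↑l + 1) → Fin H), h0, j⟩)
  | .inr (q, j) => .inr (Fin.cons h q, j)

def castLevel {H d din : ℕ} {a b : ℕ} (e : a = b) :
    ColIdx H a d din → ColIdx H b d din := fun s => e ▸ s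

lemma nIdx_castLevel {H d din : ℕ} {a b : ℕ} (e : a = b) (s : ColIdx H a d din) :
    nIdx (castLevel e s) = nIdx s := by subst e; rfl

lemma castLevel_inlinl {H d din : ℕ} {a b : ℕ} (e : a = b) (l : Fin a)
    (p : Fin (l : ℕ) → Fin H) (h : Fin H) (j : Fin d) :
    castLevel e (.inl (.inl ⟨l, p, h, j⟩) : ColIdx H a d din)
      = .inl (.inl ⟨Fin.cast e l, p, h, j⟩) := by subst e; rfl

lemma castLevel_inlinr {H d din : ℕ} {a b : ℕ} (e : a = b) (l : Fin a)
    (p : Fin (l : ℕ) → Fin H) (h : Fin H) (j : Fin d) :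
    castLevel e (.inl (.inr ⟨l, p, h, j⟩) : ColIdx H a d din)
      = .inl (.inr ⟨Fin.cast e l, p, h, j⟩) := by subst e; rfl

lemma castLevel_inr {H d din : ℕ} {a b : ℕ} (e : a = b) (q : Fin a → Fin H) (j : Fin din) :
    castLevel e (.inr (q, j) : ColIdx H a d din)
      = .inr (q ∘ Fin.cast e.symm, j) := by subst e; rfl

/-- the basis vector `e_a` in `ℝ^m` (indexed by natural number `a`). -/
def evec (m : ℕ) (a : ℕ) : Fin m → ℝ := fun i => if (i : ℕ) = a then 1 else 0

/-- the witness parameter vector. -/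
noncomputable def wParam (H L m d din : ℕ) (hH : 0 < H) : Params H L m d din := fun v =>
  match v with
  | .inl (.inl (l, h, i, j)) =>
      if (i : ℕ) = nIdx (Sum.inl (Sum.inl ⟨⟨0, Nat.sub_pos_of_lt l.isLt⟩, Fin.elim0, h, j⟩) :
          ColIdx H (L - (l : ℕ)) d din) then 1 else 0
  | .inl (.inr (l, h, i, j)) =>
      if (i : ℕ) = nIdx (Sum.inl (Sum.inr ⟨⟨0, Nat.sub_pos_of_lt l.isLt⟩, Fin.elim0, h, j⟩) :
          ColIdx H (L - (l : ℕ)) d din) then 1 else 0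
  | .inr (.inl (l, h, i, i')) =>
      if (∃ s : ColIdx H (L - ((l : ℕ) + 1)) d din,
          (i' : ℕ) = nIdx s ∧ (i : ℕ) = nIdx (consHead h s)) then 1 else 0
  | .inr (.inr (i, j)) =>
      if (i : ℕ) = nIdx (Sum.inr ((fun _ => ⟨0, hH⟩ : Fin (L - L) → Fin H), j) :
          ColIdx H (L - L) d din) then 1 else 0

noncomputable def idxAfter {H : ℕ} (L d din : ℕ) (hs : ℕ → Fin H) :
    (t : ℕ) → t ≤ L → ColIdx H (L - t) d din → ℕ
  | 0, _, s => nIdx s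
  | t + 1, ht, s => idxAfter L d din hs t (Nat.le_of_succ_le ht)
      (castLevel (by omega) (consHead (hs t) s))

variable {H L m d din : ℕ}

lemma RV_mulVec (hH : 0 < H)
    (hcard : ∀ L' ≤ L, Fintype.card (ColIdx H L' d din) ≤ m) (r : Fin L) (h : Fin H) (s : ColIdx H (L - ((r : ℕ) + 1)) d din) :
    (RVof (wParam H L m d din hH) r h).mulVec (evec m (nIdx s))
      = evec m (nIdx (consHead h s)) := by
  funext i
  have hlt : nIdx s < m := lt_of_lt_of_le (nIdx_lt s) (hcard _ (by omega))
  have hRV : ∀ i' : Fin m, RVof (wParam H L m d din hH) r h i i'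
      = if (∃ s' : ColIdx H (L - ((r : ℕ) + 1)) d din,
          (i' : ℕ) = nIdx s' ∧ (i : ℕ) = nIdx (consHead h s')) then 1 else 0 := by
    intro i'
    simp only [RVof, Matrix.of_apply, wParam]
  simp only [Matrix.mulVec, dotProduct, hRV]
  rw [Finset.sum_eq_single (⟨nIdx s, hlt⟩ : Fin m)]
  · have hv : evec m (nIdx s) (⟨nIdx s, hlt⟩ : Fin m) = 1 := if_pos rfl
    rw [hv, mul_one]
    rw [if_congr (Iff.intro
        (fun ⟨s', h1, h2⟩ => by rw [nIdx_inj (a := s) (b := s') h1]; exact h2)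
        (fun hi => ⟨s, rfl, hi⟩)) rfl rfl]
    rfl
  · intro i' _ hne
    have hv : evec m (nIdx s) i' = 0 :=
      if_neg (fun hv => hne (Fin.ext (by simpa using hv)))
    rw [hv, mul_zero]
  · intro habs; exact absurd (Finset.mem_univ _) habs

lemma pathAct (hH : 0 < H)
    (hcard : ∀ L' ≤ L, Fintype.card (ColIdx H L' d din) ≤ m) (hs : ℕ → Fin H) :
    ∀ (t : ℕ) (ht : t ≤ L) (s : ColIdx H (L - t) d din),
    (rPath (RVof (wParam H L m d din hH)) hs t).mulVec (evec m (nIdx s))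
      = evec m (idxAfter L d din hs t ht s) := by
  intro t
  induction t with
  | zero =>
    intro ht s
    show ((1 : Matrix (Fin m) (Fin m) ℝ)).mulVec _ = _
    rw [Matrix.one_mulVec]
    rfl
  | succ t iht =>
    intro ht s
    show ((rPath (RVof (wParam H L m d din hH)) hs t) *
        (if hl : t < L then RVof (wParam H L m d din hH) ⟨t, hl⟩ (hs t) else 1)).mulVec _ = _
    rw [dif_pos (show t < L by omega), ← Matrix.mulVec_mulVec,
      RV_mulVec hH hcard ⟨t, by omega⟩ (hs t) s,
      ← nIdx_castLevel (show L - (t + 1) + 1 = L - t by omega) (consHead (hs t) s)]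
    exact iht (Nat.le_of_succ_le ht) _

def stateQ (l : Fin L) (hs : ℕ → Fin H) (h : Fin H) (j : Fin d) (t : ℕ) (ht : t ≤ (l : ℕ)) :
    ColIdx H (L - t) d din :=
  Sum.inl (Sum.inl ⟨⟨(l : ℕ) - t, by omega⟩, fun u => hs (t + (u : ℕ)), h, j⟩)

def stateK (l : Fin L) (hs : ℕ → Fin H) (h : Fin H) (j : Fin d) (t : ℕ) (ht : t ≤ (l : ℕ)) :
    ColIdx H (L - t) d din :=
  Sum.inl (Sum.inr ⟨⟨(l : ℕ) - t, by omega⟩, fun u => hs (t + (u : ℕ)), h, j⟩)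

def stateU (hs : ℕ → Fin H) (j : Fin din) (t : ℕ) (ht : t ≤ L) :
    ColIdx H (L - t) d din :=
  Sum.inr ((fun u => hs (t + (u : ℕ)) : Fin (L - t) → Fin H), j)

lemma mkQ_ext {n H d : ℕ} {x y : ℕ} (hx : x < n) (hy : y < n) (exy : x = y)
    (p : Fin x → Fin H) (q : Fin y → Fin H) (hpq : ∀ u : Fin x, p u = q (Fin.cast exy u))
    (h : Fin H) (j : Fin d) :
    (⟨⟨x, hx⟩, p, h, j⟩ : Σ l : Fin n, (Fin (l : ℕ) → Fin H) × Fin H × Fin d)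
      = ⟨⟨y, hy⟩, q, h, j⟩ := by
  subst exy
  have hp : p = q := funext fun u => hpq u
  subst hp
  rfl

lemma cons_shift {x : ℕ} (hs : ℕ → Fin H) (t : ℕ) :
    ∀ w : Fin (x + 1), (Fin.cons (hs t) (fun u : Fin x => hs (t + 1 + (u : ℕ))) :
      Fin (x + 1) → Fin H) w = hs (t + (w : ℕ)) := by
  intro w
  refine Fin.cases ?_ (fun v => ?_) w
  · simp
  · rw [Fin.cons_succ]
    exact congrArg hs (by rw [Fin.val_succ]; omega)

lemma stateQ_succ (l : Fin L) (hs : ℕ → Fin H) (h : Fin H) (j : Fin d) (t : ℕ)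
    (ht : t + 1 ≤ (l : ℕ)) :
    castLevel (show L - (t + 1) + 1 = L - t by omega)
        (consHead (hs t) (stateQ (din := din) l hs h j (t + 1) ht))
      = stateQ (din := din) l hs h j t (by omega) := by
  rw [stateQ, consHead, castLevel_inlinl]
  refine congrArg (fun z => Sum.inl (Sum.inl z)) ?_
  exact mkQ_ext _ _ (by omega) _ _ (fun u => cons_shift hs t u) h j

lemma stateK_succ (l : Fin L) (hs : ℕ → Fin H) (h : Fin H) (j : Fin d) (t : ℕ)
    (ht : t + 1 ≤ (l : ℕ)) :
    castLevel (show L - (t + 1) + 1 = L - t by omega)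
        (consHead (hs t) (stateK (din := din) l hs h j (t + 1) ht))
      = stateK (din := din) l hs h j t (by omega) := by
  rw [stateK, consHead, castLevel_inlinr]
  refine congrArg (fun z => Sum.inl (Sum.inr z)) ?_
  exact mkQ_ext _ _ (by omega) _ _ (fun u => cons_shift hs t u) h j

lemma stateU_succ (hs : ℕ → Fin H) (j : Fin din) (t : ℕ) (ht : t + 1 ≤ L) :
    castLevel (show L - (t + 1) + 1 = L - t by omega)
        (consHead (hs t) (stateU (L := L) (d := d) hs j (t + 1) ht))
      = stateU (L := L) (d := d) hs j t (by omega) := by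
  rw [stateU, consHead, castLevel_inr]
  refine congrArg Sum.inr (Prod.ext ?_ rfl)
  funext u
  exact cons_shift (x := L - (t+1)) hs t
    (Fin.cast (show L - t = L - (t+1) + 1 by omega) u)

lemma idxAfter_stateQ (l : Fin L) (hs : ℕ → Fin H) (h : Fin H) (j : Fin d) :
    ∀ (t : ℕ) (ht : t ≤ (l : ℕ)),
      idxAfter L d din hs t (by omega) (stateQ (din := din) l hs h j t ht)
        = nIdx (stateQ (din := din) l hs h j 0 (Nat.zero_le _)) := by
  intro t
  induction t with
  | zero => intro ht; rfl
  | succ t iht =>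
    intro ht
    show idxAfter L d din hs t _ (castLevel _ (consHead (hs t) (stateQ l hs h j (t+1) ht))) = _
    rw [stateQ_succ l hs h j t ht]
    exact iht (by omega)

lemma idxAfter_stateK (l : Fin L) (hs : ℕ → Fin H) (h : Fin H) (j : Fin d) :
    ∀ (t : ℕ) (ht : t ≤ (l : ℕ)),
      idxAfter L d din hs t (by omega) (stateK (din := din) l hs h j t ht)
        = nIdx (stateK (din := din) l hs h j 0 (Nat.zero_le _)) := by
  intro t
  induction t with
  | zero => intro ht; rfl
  | succ t iht =>
    intro ht
    show idxAfter L d din hs t _ (castLevel _ (consHead (hs t) (stateK l hs h j (t+1) ht))) = _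
    rw [stateK_succ l hs h j t ht]
    exact iht (by omega)

lemma idxAfter_stateU (hs : ℕ → Fin H) (j : Fin din) :
    ∀ (t : ℕ) (ht : t ≤ L),
      idxAfter L d din hs t ht (stateU (L := L) (d := d) hs j t ht)
        = nIdx (stateU (L := L) (d := d) hs j 0 (Nat.zero_le _)) := by
  intro t
  induction t with
  | zero => intro ht; rfl
  | succ t iht =>
    intro ht
    show idxAfter L d din hs t _ (castLevel _ (consHead (hs t) (stateU hs j (t+1) ht))) = _
    rw [stateU_succ hs j t ht]
    exact iht (by omega)

variable (hH : 0 < H)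

lemma stateQ_zero (l : Fin L) (p : Fin (l : ℕ) → Fin H) (h : Fin H) (j : Fin d) :
    (stateQ (din := din) l (extPrefix hH p) h j 0 (Nat.zero_le _))
      = (Sum.inl (Sum.inl ⟨l, p, h, j⟩) : ColIdx H L d din) := by
  refine congrArg (fun z => Sum.inl (Sum.inl z)) ?_
  refine mkQ_ext _ l.isLt (by omega) _ p (fun u => ?_) h j
  rw [extPrefix, dif_pos (show 0 + (u : ℕ) < (l : ℕ) by omega)]
  exact congrArg p (Fin.ext (by simp))

lemma stateK_zero (l : Fin L) (p : Fin (l : ℕ) → Fin H) (h : Fin H) (j : Fin d) :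
    (stateK (din := din) l (extPrefix hH p) h j 0 (Nat.zero_le _))
      = (Sum.inl (Sum.inr ⟨l, p, h, j⟩) : ColIdx H L d din) := by
  refine congrArg (fun z => Sum.inl (Sum.inr z)) ?_
  refine mkQ_ext _ l.isLt (by omega) _ p (fun u => ?_) h j
  rw [extPrefix, dif_pos (show 0 + (u : ℕ) < (l : ℕ) by omega)]
  exact congrArg p (Fin.ext (by simp))

lemma stateU_zero (p : Fin L → Fin H) (j : Fin din) :
    (stateU (L := L) (d := d) (extPrefix hH p) j 0 (Nat.zero_le _))
      = (Sum.inr (p, j) : ColIdx H L d din) := by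
  refine congrArg Sum.inr (Prod.ext ?_ rfl)
  funext u
  show extPrefix hH p (0 + (u : ℕ)) = p u
  rw [extPrefix, dif_pos (show 0 + (u : ℕ) < L by omega)]
  exact congrArg p (Fin.ext (by simp))

lemma stateQ_top (l : Fin L) (hs : ℕ → Fin H) (h : Fin H) (j : Fin d) :
    stateQ (din := din) l hs h j (l : ℕ) le_rfl
      = (Sum.inl (Sum.inl ⟨⟨0, Nat.sub_pos_of_lt l.isLt⟩, Fin.elim0, h, j⟩) :
          ColIdx H (L - (l : ℕ)) d din) := by
  refine congrArg (fun z => Sum.inl (Sum.inl z)) ?_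
  exact mkQ_ext _ _ (by omega) _ Fin.elim0 (fun u => (Fin.cast (by omega) u).elim0) h j

lemma stateK_top (l : Fin L) (hs : ℕ → Fin H) (h : Fin H) (j : Fin d) :
    stateK (din := din) l hs h j (l : ℕ) le_rfl
      = (Sum.inl (Sum.inr ⟨⟨0, Nat.sub_pos_of_lt l.isLt⟩, Fin.elim0, h, j⟩) :
          ColIdx H (L - (l : ℕ)) d din) := by
  refine congrArg (fun z => Sum.inl (Sum.inr z)) ?_
  exact mkQ_ext _ _ (by omega) _ Fin.elim0 (fun u => (Fin.cast (by omega) u).elim0) h j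

lemma stateU_top (hs : ℕ → Fin H) (j : Fin din) :
    stateU (L := L) (d := d) hs j L le_rfl
      = (Sum.inr ((fun _ => ⟨0, hH⟩ : Fin (L - L) → Fin H), j) :
          ColIdx H (L - L) d din) := by
  refine congrArg Sum.inr (Prod.ext ?_ rfl)
  funext u
  exact absurd u.isLt (by omega)

lemma Rall_wParam (hcard : ∀ L' ≤ L, Fintype.card (ColIdx H L' d din) ≤ m)
    (i : Fin m) (c : ColIdx H L d din) :
    Rall hH (wParam H L m d din hH) i c = if (i : ℕ) = nIdx c then 1 else 0 := by
  rcases c with (⟨l, p, h, j⟩ | ⟨l, p, h, j⟩) | ⟨p, j⟩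
  · show (rPath (RVof (wParam H L m d din hH)) (extPrefix hH p) (l : ℕ)
        * RQof (wParam H L m d din hH) l h) i j = _
    have hcol : (fun k => RQof (wParam H L m d din hH) l h k j)
        = evec m (nIdx (Sum.inl (Sum.inl ⟨⟨0, Nat.sub_pos_of_lt l.isLt⟩, Fin.elim0, h, j⟩) :
            ColIdx H (L - (l : ℕ)) d din)) := funext fun k => rfl
    have h1 : (rPath (RVof (wParam H L m d din hH)) (extPrefix hH p) (l : ℕ)
        * RQof (wParam H L m d din hH) l h) i j
        = ((rPath (RVof (wParam H L m d din hH)) (extPrefix hH p) (l : ℕ)).mulVec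
            (fun k => RQof (wParam H L m d din hH) l h k j)) i := by
      rw [Matrix.mul_apply]; rfl
    rw [h1, hcol, pathAct hH hcard (extPrefix hH p) (l : ℕ) (le_of_lt l.isLt) _]
    have h2 : idxAfter L d din (extPrefix hH p) (l : ℕ) (le_of_lt l.isLt)
        (Sum.inl (Sum.inl ⟨⟨0, Nat.sub_pos_of_lt l.isLt⟩, Fin.elim0, h, j⟩))
        = nIdx (Sum.inl (Sum.inl ⟨l, p, h, j⟩) : ColIdx H L d din) := by
      rw [← stateQ_top (din := din) l (extPrefix hH p) h j,
        idxAfter_stateQ l (extPrefix hH p) h j (l : ℕ) le_rfl,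
        stateQ_zero hH l p h j]
    rw [h2]
    rfl
  · show (rPath (RVof (wParam H L m d din hH)) (extPrefix hH p) (l : ℕ)
        * RKof (wParam H L m d din hH) l h) i j = _
    have hcol : (fun k => RKof (wParam H L m d din hH) l h k j)
        = evec m (nIdx (Sum.inl (Sum.inr ⟨⟨0, Nat.sub_pos_of_lt l.isLt⟩, Fin.elim0, h, j⟩) :
            ColIdx H (L - (l : ℕ)) d din)) := funext fun k => rfl
    have h1 : (rPath (RVof (wParam H L m d din hH)) (extPrefix hH p) (l : ℕ)
        * RKof (wParam H L m d din hH) l h) i j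
        = ((rPath (RVof (wParam H L m d din hH)) (extPrefix hH p) (l : ℕ)).mulVec
            (fun k => RKof (wParam H L m d din hH) l h k j)) i := by
      rw [Matrix.mul_apply]; rfl
    rw [h1, hcol, pathAct hH hcard (extPrefix hH p) (l : ℕ) (le_of_lt l.isLt) _]
    have h2 : idxAfter L d din (extPrefix hH p) (l : ℕ) (le_of_lt l.isLt)
        (Sum.inl (Sum.inr ⟨⟨0, Nat.sub_pos_of_lt l.isLt⟩, Fin.elim0, h, j⟩))
        = nIdx (Sum.inl (Sum.inr ⟨l, p, h, j⟩) : ColIdx H L d din) := by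
      rw [← stateK_top (din := din) l (extPrefix hH p) h j,
        idxAfter_stateK l (extPrefix hH p) h j (l : ℕ) le_rfl,
        stateK_zero hH l p h j]
    rw [h2]
    rfl
  · show (rPath (RVof (wParam H L m d din hH)) (extPrefix hH p) L
        * Uof (wParam H L m d din hH)) i j = _
    have hcol : (fun k => Uof (wParam H L m d din hH) k j)
        = evec m (nIdx (Sum.inr ((fun _ => ⟨0, hH⟩ : Fin (L - L) → Fin H), j) :
            ColIdx H (L - L) d din)) := funext fun k => rfl
    have h1 : (rPath (RVof (wParam H L m d din hH)) (extPrefix hH p) L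
        * Uof (wParam H L m d din hH)) i j
        = ((rPath (RVof (wParam H L m d din hH)) (extPrefix hH p) L).mulVec
            (fun k => Uof (wParam H L m d din hH) k j)) i := by
      rw [Matrix.mul_apply]; rfl
    rw [h1, hcol, pathAct hH hcard (extPrefix hH p) L le_rfl _]
    have h2 : idxAfter L d din (extPrefix hH p) L le_rfl
        (Sum.inr ((fun _ => ⟨0, hH⟩ : Fin (L - L) → Fin H), j))
        = nIdx (Sum.inr (p, j) : ColIdx H L d din) := by
      rw [← stateU_top (d := d) hH (extPrefix hH p) j,
        idxAfter_stateU (extPrefix hH p) j L le_rfl,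
        stateU_zero hH p j]
    rw [h2]
    rfl

lemma gram_wParam (hcard : ∀ L' ≤ L, Fintype.card (ColIdx H L' d din) ≤ m) :
    (Rall hH (wParam H L m d din hH))ᵀ * Rall hH (wParam H L m d din hH) = 1 := by
  ext c c'
  rw [Matrix.mul_apply]
  simp only [Matrix.transpose_apply, Rall_wParam hH hcard]
  rcases eq_or_ne c c' with rfl | hne
  · have hlt : nIdx c < m := lt_of_lt_of_le (nIdx_lt c) (hcard L le_rfl)
    rw [Finset.sum_eq_single (⟨nIdx c, hlt⟩ : Fin m)]
    · rw [if_pos rfl, mul_one, Matrix.one_apply_eq]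
    · intro i _ hne'
      rw [if_neg (fun hv => hne' (Fin.ext (by simpa using hv))), zero_mul]
    · intro habs; exact absurd (Finset.mem_univ _) habs
  · rw [Matrix.one_apply_ne hne, Finset.sum_eq_zero]
    intro i _
    by_cases h1 : (i : ℕ) = nIdx c
    · by_cases h2 : (i : ℕ) = nIdx c'
      · exact absurd (nIdx_inj (h1.symm.trans h2)) hne
      · rw [if_neg h2, mul_zero]
    · rw [if_neg h1, zero_mul]

end Witness


/-- random parameters give full column rank: if the
parameter entries are drawn from an absolutely continuous joint distribution
and `m ≥ 2d·(H + H² + ⋯ + H^L) + d_in·H^L`, then with probability 1 the stacked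
matrix `R_all` has full column rank `M = 2d·Σ_{l=1}^L H^l + d_in·H^L`. -/
theorem stmt13 {H L m d din : ℕ} (hH : 0 < H)
    (hm : 2 * d * (∑ l ∈ Finset.range L, H ^ (l + 1)) + din * H ^ L ≤ m)
    {Ω : Type*} [MeasureSpace Ω] [IsProbabilityMeasure (volume : Measure Ω)]
    (θ : Ω → Params H L m d din) (hθ : Measurable θ)
    (habs : Measure.map θ volume ≪ (volume : Measure (Params H L m d din))) :
    volume {ω | (Rall hH (θ ω)).rank =
      2 * d * (∑ l ∈ Finset.range L, H ^ (l + 1)) + din * H ^ L} = 1 := by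
  classical
  set M := 2 * d * (∑ l ∈ Finset.range L, H ^ (l + 1)) + din * H ^ L with hMdef
  have hcardL : Fintype.card (ColIdx H L d din) = M := cardColIdx H L d din
  have hcard : ∀ L' ≤ L, Fintype.card (ColIdx H L' d din) ≤ m := fun L' hL' =>
    le_trans (cardColIdx_mono hH hL' d din) (le_trans (le_of_eq hcardL) hm)
  have hg : gramPoly (H := H) (L := L) (m := m) (d := d) (din := din) hH ≠ 0 := by
    intro h0
    have he := eval_gramPoly (wParam H L m d din hH) hH
    rw [h0, map_zero] at he
    rw [gram_wParam hH hcard, Matrix.det_one] at he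
    exact zero_ne_one he
  set Bad : Set (Params H L m d din) :=
    {x | MvPolynomial.eval x (gramPoly (H := H) (L := L) (m := m) (d := d) (din := din) hH) = 0}
    with hBdef
  have hBadM : MeasurableSet Bad := (measurable_eval _) (measurableSet_singleton 0)
  have hBad0 : volume Bad = 0 :=
    mv_zero_set (gramPoly (H := H) (L := L) (m := m) (d := d) (din := din) hH) hg
  have hpre0 : volume (θ ⁻¹' Bad) = 0 := by
    rw [← Measure.map_apply hθ hBadM]
    exact habs hBad0
  have hsub : {ω | ¬ ((Rall hH (θ ω)).rank = M)} ⊆ θ ⁻¹' Bad := by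
    intro ω hω
    by_contra hB
    apply hω
    have hne : MvPolynomial.eval (θ ω)
        (gramPoly (H := H) (L := L) (m := m) (d := d) (din := din) hH) ≠ 0 := hB
    rw [eval_gramPoly] at hne
    rw [rank_of_gram_ne _ hne, hcardL]
  have h1 : (1 : ENNReal) ≤ volume {ω | (Rall hH (θ ω)).rank = M} := by
    calc (1 : ENNReal) = volume (Set.univ : Set Ω) := measure_univ.symm
    _ ≤ volume ({ω | (Rall hH (θ ω)).rank = M} ∪ θ ⁻¹' Bad) := measure_mono (fun ω _ => by
        by_cases h : (Rall hH (θ ω)).rank = M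
        · exact Or.inl h
        · exact Or.inr (hsub h))
    _ ≤ volume {ω | (Rall hH (θ ω)).rank = M} + volume (θ ⁻¹' Bad) := measure_union_le _ _
    _ = volume {ω | (Rall hH (θ ω)).rank = M} := by rw [hpre0, add_zero]
  exact le_antisymm prob_le_one h1
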